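/- Let E and F be categories with finite limits, G a cartesian comonad on E, H a cartesian comonad on F, and (S, σ) : G → H an oplax morphism of comonads, with T : E_G → F_H the corresponding lifted functor satisfying U_H ∘ T = S ∘ U_G. If S has a right adjoint R : F → E with unit i and counit e, then T has a right adjoint, which is given by the equalizer of the coreflexive pair φ₁, φ₂ : F_G R U_H ⇒ F_G R H U_H, where φ₁ = F_G σ̃ U_H ∘ η_G F_G R U_H (with σ̃ : GR ⇒ RH the mate RHe ∘ RσR ∘ iGR of σ), φ₂ = F_G R U_H η_H, and both φ₁ and φ₂ are sections of the common retraction F_G R ε_H U_H. -/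

import Mathlib

open CategoryTheory CategoryTheory.Limits

universe v u v₂ u₂

variable {E : Type u} [Category.{v} E] {F : Type u₂} [Category.{v₂} F]

/-- `(S, σ)` is an oplax morphism of comonads `G → H`. -/
def IsOplaxMorphism (G : Comonad E) (H : Comonad F) (S : E ⥤ F)
    (σ : G.toFunctor ⋙ S ⟶ S ⋙ H.toFunctor) : Prop :=
  (∀ X : E, σ.app X ≫ H.ε.app (S.obj X) = S.map (G.ε.app X)) ∧
  (∀ X : E, σ.app X ≫ H.δ.app (S.obj X) =
      S.map (G.δ.app X) ≫ σ.app (G.obj X) ≫ H.map (σ.app X))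

section
variable (G : Comonad E) (H : Comonad F) (S : E ⥤ F)
  (σ : G.toFunctor ⋙ S ⟶ S ⋙ H.toFunctor) (R : F ⥤ E) (adj : S ⊣ R)

/-- The mate `σ̃ : GR ⇒ RH` of `σ : SG ⇒ HS`, evaluated at `Y`:
`RHe ∘ RσR ∘ iGR`. -/
def sigmaTildeApp (Y : F) : G.obj (R.obj Y) ⟶ R.obj (H.obj Y) :=
  adj.unit.app (G.obj (R.obj Y)) ≫ R.map (σ.app (R.obj Y)) ≫
    R.map (H.map (adj.counit.app Y))

/-- The component at `B` of `φ₁ = F_G σ̃ U_H ∘ η_G F_G R U_H`. -/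
def phiOne (B : H.Coalgebra) :
    G.cofree.obj (R.obj (H.forget.obj B)) ⟶ G.cofree.obj (R.obj (H.obj (H.forget.obj B))) :=
  G.adj.unit.app (G.cofree.obj (R.obj (H.forget.obj B))) ≫
    G.cofree.map (sigmaTildeApp G H S σ R adj (H.forget.obj B))

/-- The component at `B` of `φ₂ = F_G R U_H η_H`. -/
def phiTwo (B : H.Coalgebra) :
    G.cofree.obj (R.obj (H.forget.obj B)) ⟶ G.cofree.obj (R.obj (H.obj (H.forget.obj B))) :=
  G.cofree.map (R.map (H.forget.map (H.adj.unit.app B)))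

/-- The component at `B` of the common retraction `F_G R ε_H U_H`. -/
def psiRetraction (B : H.Coalgebra) :
    G.cofree.obj (R.obj (H.obj (H.forget.obj B))) ⟶ G.cofree.obj (R.obj (H.forget.obj B)) :=
  G.cofree.map (R.map (H.ε.app (H.forget.obj B)))

end
section Aux
variable {G : Comonad E} {H : Comonad F} {S : E ⥤ F}
  (σ : G.toFunctor ⋙ S ⟶ S ⋙ H.toFunctor) {R : F ⥤ E} (adj : S ⊣ R)

lemma sigmaTilde_counit
    (h1 : ∀ X : E, σ.app X ≫ H.ε.app (S.obj X) = S.map (G.ε.app X)) (Y : F) :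
    sigmaTildeApp G H S σ R adj Y ≫ R.map (H.ε.app Y) = G.ε.app (R.obj Y) := by
  have s1 : R.map (H.map (adj.counit.app Y)) ≫ R.map (H.ε.app Y)
      = R.map (H.ε.app (S.obj (R.obj Y))) ≫ R.map (adj.counit.app Y) := by
    rw [← R.map_comp, ← R.map_comp]
    congr 1
    exact H.ε.naturality (adj.counit.app Y)
  have s2 : adj.unit.app (G.obj (R.obj Y)) ≫ R.map (S.map (G.ε.app (R.obj Y)))
      = G.ε.app (R.obj Y) ≫ adj.unit.app (R.obj Y) := by
    simpa using (adj.unit.naturality (G.ε.app (R.obj Y))).symm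
  rw [sigmaTildeApp]
  simp only [Category.assoc, s1]
  rw [← R.map_comp_assoc, h1 (R.obj Y), reassoc_of% s2, adj.right_triangle_components,
    Category.comp_id]

lemma mate_natural {X : E} {Y : F} (h : S.obj X ⟶ Y) :
    adj.unit.app (G.obj X) ≫ R.map (σ.app X) ≫ R.map (H.map h) =
      G.map (adj.unit.app X ≫ R.map h) ≫ sigmaTildeApp G H S σ R adj Y := by
  rw [sigmaTildeApp]
  have h1 : G.map (adj.unit.app X ≫ R.map h) ≫ adj.unit.app (G.obj (R.obj Y))
      = adj.unit.app (G.obj X) ≫ R.map (S.map (G.map (adj.unit.app X ≫ R.map h))) := by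
    simpa using adj.unit.naturality (G.map (adj.unit.app X ≫ R.map h))
  rw [reassoc_of% h1]
  have h2 : S.map (G.map (adj.unit.app X ≫ R.map h)) ≫ σ.app (R.obj Y)
      = σ.app X ≫ H.map (S.map (adj.unit.app X ≫ R.map h)) := σ.naturality _
  have h3 : S.map (adj.unit.app X ≫ R.map h) ≫ adj.counit.app Y = h := by
    have h4 := adj.counit.naturality h
    simp only [Functor.comp_map, Functor.id_map] at h4
    rw [S.map_comp, Category.assoc, h4]
    simp
  congr 1
  simp only [← R.map_comp, Category.assoc]
  congr 1
  rw [reassoc_of% h2, ← H.map_comp, h3]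

lemma phiOne_psi (h1 : ∀ X : E, σ.app X ≫ H.ε.app (S.obj X) = S.map (G.ε.app X))
    (B : H.Coalgebra) :
    phiOne G H S σ R adj B ≫ psiRetraction G H R B = 𝟙 _ := by
  ext1
  simp [phiOne, psiRetraction]
  erw [Comonad.Coalgebra.comp_f, Comonad.cofree_map_f]
  dsimp only
  erw [Category.assoc, ← G.map_comp, sigmaTilde_counit σ adj h1]
  erw [G.right_counit]
  rfl

lemma phiTwo_psi (B : H.Coalgebra) :
    phiTwo G H R B ≫ psiRetraction G H R B = 𝟙 _ := by
  ext1
  simp [phiTwo, psiRetraction, ← Functor.map_comp, B.counit]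
  erw [Comonad.forget_map]
  dsimp only
  erw [← R.map_comp, B.counit, R.map_id, G.map_id]
  rfl

lemma cofree_homEquiv_f {A : G.Coalgebra} {Z : E} (g : A.A ⟶ Z) :
    ((G.adj.homEquiv A Z) g).f = A.a ≫ G.map g := by
  erw [Adjunction.homEquiv_unit]
  simp [Comonad.adj_unit]
  rfl

lemma cofree_homEquiv_symm {A : G.Coalgebra} {Z : E} (f : A ⟶ G.cofree.obj Z) :
    (G.adj.homEquiv A Z).symm f = f.f ≫ G.ε.app Z := by
  rw [Adjunction.homEquiv_counit]
  simp [Comonad.adj_counit]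
  rfl

lemma symm_phiOne {B : H.Coalgebra} {A : G.Coalgebra}
    (f : A ⟶ G.cofree.obj (R.obj (H.forget.obj B))) :
    (f ≫ phiOne G H S σ R adj B).f ≫ G.ε.app _ =
      f.f ≫ sigmaTildeApp G H S σ R adj (H.forget.obj B) := by
  have n : G.map (sigmaTildeApp G H S σ R adj (H.forget.obj B)) ≫ G.ε.app _
      = G.ε.app _ ≫ sigmaTildeApp G H S σ R adj (H.forget.obj B) :=
    G.ε.naturality _
  simp [phiOne]
  erw [Comonad.Coalgebra.comp_f, Comonad.cofree_map_f]
  dsimp only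
  erw [Category.assoc, Category.assoc, n]
  erw [← Category.assoc (G.δ.app _), G.left_counit, Category.id_comp]

lemma symm_phiTwo {B : H.Coalgebra} {A : G.Coalgebra}
    (f : A ⟶ G.cofree.obj (R.obj (H.forget.obj B))) :
    (f ≫ phiTwo G H R B).f ≫ G.ε.app _ =
      f.f ≫ G.ε.app _ ≫ R.map B.a := by
  have n : G.map (R.map B.a) ≫ G.ε.app _ = G.ε.app _ ≫ R.map B.a := G.ε.naturality _
  simp [phiTwo]
  erw [Comonad.forget_map]
  dsimp only
  erw [Category.assoc]
  exact congrArg (f.f ≫ ·) n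

lemma cond_iff_phi {B : H.Coalgebra} {A : G.Coalgebra}
    (f : A ⟶ G.cofree.obj (R.obj (H.forget.obj B))) :
    (f ≫ phiOne G H S σ R adj B = f ≫ phiTwo G H R B) ↔
      (f.f ≫ sigmaTildeApp G H S σ R adj (H.forget.obj B)
        = f.f ≫ G.ε.app _ ≫ R.map B.a) := by
  constructor
  · intro hf
    rw [← symm_phiOne σ adj f, ← symm_phiTwo f, hf]
  · intro hf
    apply (G.adj.homEquiv _ _).symm.injective
    rw [cofree_homEquiv_symm, cofree_homEquiv_symm, symm_phiOne σ adj f, symm_phiTwo f, hf]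

lemma cond_transpose {A : G.Coalgebra} {B : H.Coalgebra} (k : S.obj A.A ⟶ B.A) :
    (S.map A.a ≫ σ.app A.A ≫ H.map k = k ≫ B.a) ↔
      ((A.a ≫ G.map (adj.unit.app A.A ≫ R.map k)) ≫ sigmaTildeApp G H S σ R adj B.A
        = (A.a ≫ G.map (adj.unit.app A.A ≫ R.map k)) ≫ G.ε.app (R.obj B.A) ≫ R.map B.a) := by
  have hL : (adj.homEquiv A.A (H.obj B.A)) (S.map A.a ≫ σ.app A.A ≫ H.map k)
      = (A.a ≫ G.map (adj.unit.app A.A ≫ R.map k)) ≫ sigmaTildeApp G H S σ R adj B.A := by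
    rw [Adjunction.homEquiv_unit]
    have n : adj.unit.app A.A ≫ R.map (S.map A.a) = A.a ≫ adj.unit.app (G.obj A.A) := by
      simpa using (adj.unit.naturality A.a).symm
    rw [R.map_comp, R.map_comp, reassoc_of% n, mate_natural σ adj k, Category.assoc]
  have hR : (adj.homEquiv A.A (H.obj B.A)) (k ≫ B.a)
      = (A.a ≫ G.map (adj.unit.app A.A ≫ R.map k)) ≫ G.ε.app (R.obj B.A) ≫ R.map B.a := by
    rw [Adjunction.homEquiv_unit, R.map_comp]
    have n2 : G.map (adj.unit.app A.A ≫ R.map k) ≫ G.ε.app (R.obj B.A)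
        = G.ε.app A.A ≫ (adj.unit.app A.A ≫ R.map k) := G.ε.naturality _
    rw [Category.assoc, reassoc_of% n2, A.counit_assoc]
  rw [← Equiv.apply_eq_iff_eq (adj.homEquiv A.A (H.obj B.A)), hL, hR]

/-- The master condition equivalence: `f` equalizes `φ₁, φ₂` iff the transposed map
is a coalgebra morphism condition. -/
lemma cond_master {A : G.Coalgebra} {B : H.Coalgebra}
    (f : A ⟶ G.cofree.obj (R.obj (H.forget.obj B))) :
    (f ≫ phiOne G H S σ R adj B = f ≫ phiTwo G H R B) ↔
      (S.map A.a ≫ σ.app A.A ≫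
          H.map ((adj.homEquiv A.A B.A).symm ((G.adj.homEquiv A (R.obj B.A)).symm f))
        = ((adj.homEquiv A.A B.A).symm ((G.adj.homEquiv A (R.obj B.A)).symm f)) ≫ B.a) := by
  set k := (adj.homEquiv A.A B.A).symm ((G.adj.homEquiv A (R.obj B.A)).symm f) with hk
  have hf : f.f = A.a ≫ G.map (adj.unit.app A.A ≫ R.map k) := by
    have : f = (G.adj.homEquiv A (R.obj B.A)) ((adj.homEquiv A.A B.A) k) := by
      rw [hk]
      erw [Equiv.apply_symm_apply, Equiv.apply_symm_apply]
    rw [this, cofree_homEquiv_f, Adjunction.homEquiv_unit]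
  rw [cond_iff_phi σ adj f, cond_transpose σ adj k, hf]
  exact Iff.rfl

end Aux

section Main
variable {G : Comonad E} {H : Comonad F} {S : E ⥤ F}
  (σ : G.toFunctor ⋙ S ⟶ S ⋙ H.toFunctor) {R : F ⥤ E} (adj : S ⊣ R)
  {T : G.Coalgebra ⥤ H.Coalgebra}

variable (hT : T ⋙ H.forget = G.forget ⋙ S)
  (hTobj : ∀ A : G.Coalgebra,
    (T.obj A).A = S.obj A.A ∧ HEq (T.obj A).a (S.map A.a ≫ σ.app A.A))

include hT in
lemma T_map_f {A A' : G.Coalgebra} (p : A ⟶ A') :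
    (T.map p).f = eqToHom (hTobj A).1 ≫ S.map p.f ≫ eqToHom (hTobj A').1.symm := by
  have h := Functor.congr_hom hT p
  simp only [Functor.comp_map, Comonad.forget_map] at h
  exact h

lemma T_obj_a (A : G.Coalgebra) :
    (T.obj A).a = eqToHom (hTobj A).1 ≫ (S.map A.a ≫ σ.app A.A) ≫
      eqToHom (show H.obj (S.obj A.A) = H.obj ((T.obj A).A) by rw [(hTobj A).1]) := by
  have h' : H.obj ((T.obj A).A) = H.obj (S.obj A.A) := by rw [(hTobj A).1]
  exact (conj_eqToHom_iff_heq ((T.obj A).a) (S.map A.a ≫ σ.app A.A) (hTobj A).1 h').2 (hTobj A).2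

lemma kOf_cond {A : G.Coalgebra} {B : H.Coalgebra} (m : T.obj A ⟶ B) :
    S.map A.a ≫ σ.app A.A ≫ H.map (eqToHom (hTobj A).1.symm ≫ m.f)
      = (eqToHom (hTobj A).1.symm ≫ m.f) ≫ B.a := by
  have hm := m.h
  rw [T_obj_a σ hTobj A] at hm
  rw [Category.assoc, ← hm]
  simp [eqToHom_map]

lemma invFun_h {A : G.Coalgebra} {B : H.Coalgebra} (k : S.obj A.A ⟶ B.A)
    (hk : S.map A.a ≫ σ.app A.A ≫ H.map k = k ≫ B.a) :
    (T.obj A).a ≫ H.map (eqToHom (hTobj A).1 ≫ k)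
      = (eqToHom (hTobj A).1 ≫ k) ≫ B.a := by
  simp only [T_obj_a σ hTobj A]
  simp only [Functor.map_comp, eqToHom_map, Category.assoc, eqToHom_trans, eqToHom_trans_assoc,
    eqToHom_refl, Category.id_comp]
  rw [hk]

variable [HasLimitsOfShape WalkingParallelPair G.Coalgebra]

/-- The candidate hom-set equivalence for the lifted right adjoint. -/
noncomputable def liftedEquiv (A : G.Coalgebra) (B : H.Coalgebra) :
    (T.obj A ⟶ B) ≃ (A ⟶ equalizer (phiOne G H S σ R adj B) (phiTwo G H R B)) where
  toFun m := equalizer.lift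
    ((G.adj.homEquiv A (R.obj B.A)) ((adj.homEquiv A.A B.A) (eqToHom (hTobj A).1.symm ≫ m.f)))
    (by
      erw [cond_master σ adj, Equiv.symm_apply_apply, Equiv.symm_apply_apply]
      simpa only [Equiv.symm_apply_apply] using kOf_cond σ hTobj m)
  invFun p :=
    { f := eqToHom (hTobj A).1 ≫
        (adj.homEquiv A.A B.A).symm ((G.adj.homEquiv A (R.obj B.A)).symm
          (p ≫ equalizer.ι (phiOne G H S σ R adj B) (phiTwo G H R B)))
      h := by
        have hc : (p ≫ equalizer.ι (phiOne G H S σ R adj B) (phiTwo G H R B)) ≫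
            phiOne G H S σ R adj B =
            (p ≫ equalizer.ι (phiOne G H S σ R adj B) (phiTwo G H R B)) ≫ phiTwo G H R B := by
          rw [Category.assoc, Category.assoc, equalizer.condition]
        exact invFun_h σ hTobj _ ((cond_master σ adj
          (p ≫ equalizer.ι (phiOne G H S σ R adj B) (phiTwo G H R B))).1 hc) }
  left_inv m := by
    ext1
    simp only [equalizer.lift_ι, Equiv.symm_apply_apply, eqToHom_trans_assoc, eqToHom_refl,
      Category.id_comp]
    erw [equalizer.lift_ι, Equiv.symm_apply_apply, Equiv.symm_apply_apply]
    simp only [eqToHom_trans_assoc, eqToHom_refl, Category.id_comp]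
  right_inv p := by
    apply equalizer.hom_ext
    simp only [equalizer.lift_ι, eqToHom_trans_assoc, eqToHom_refl, Category.id_comp,
      Equiv.apply_symm_apply]
    erw [equalizer.lift_ι, Equiv.apply_symm_apply, Equiv.apply_symm_apply]
    rfl

include hT in
lemma liftedEquiv_natural (A' A : G.Coalgebra) (B : H.Coalgebra) (q : A' ⟶ A)
    (m : T.obj A ⟶ B) :
    liftedEquiv σ adj hTobj A' B (T.map q ≫ m) =
      q ≫ liftedEquiv σ adj hTobj A B m := by
  apply equalizer.hom_ext
  have hstep : eqToHom (hTobj A').1.symm ≫ (T.map q ≫ m).f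
      = S.map q.f ≫ (eqToHom (hTobj A).1.symm ≫ m.f) := by
    simp [T_map_f σ hT hTobj q]
  simp only [liftedEquiv, Equiv.coe_fn_mk, equalizer.lift_ι, Category.assoc]
  erw [equalizer.lift_ι, equalizer.lift_ι, hstep, Adjunction.homEquiv_naturality_left]
  exact G.adj.homEquiv_naturality_left q _

end Main
/-- adjoint lifting theorem: let `(S, σ) : G → H` be an oplax morphism of
cartesian comonads with lifted functor `T : E_G ⥤ F_H` (`U_H ∘ T = S ∘ U_G`,
`T(A, α) = (SA, σ A ∘ Sα)`). If `S` has a right adjoint `R`, then `T` has a right adjoint,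
given by the equalizer of the coreflexive pair `φ₁, φ₂ : F_G R U_H ⇒ F_G R H U_H`
(where `φ₁` is built from the mate `σ̃` of `σ` and the unit `η_G`, and `φ₂` from the unit
`η_H`), both of which are sections of the retraction `F_G R ε_H U_H`. -/
theorem comonad_adjoint_lifting [HasFiniteLimits E] [HasFiniteLimits F]
    (G : Comonad E) (H : Comonad F)
    [PreservesFiniteLimits G.toFunctor] [PreservesFiniteLimits H.toFunctor]
    (S : E ⥤ F) (σ : G.toFunctor ⋙ S ⟶ S ⋙ H.toFunctor) (hσ : IsOplaxMorphism G H S σ)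
    (T : G.Coalgebra ⥤ H.Coalgebra) (hT : T ⋙ H.forget = G.forget ⋙ S)
    (hTobj : ∀ A : G.Coalgebra,
      (T.obj A).A = S.obj A.A ∧ HEq (T.obj A).a (S.map A.a ≫ σ.app A.A))
    (R : F ⥤ E) (adj : S ⊣ R) :
    (∀ B : H.Coalgebra, phiOne G H S σ R adj B ≫ psiRetraction G H R B = 𝟙 _) ∧
    (∀ B : H.Coalgebra, phiTwo G H R B ≫ psiRetraction G H R B = 𝟙 _) ∧
    ∃ Rt : H.Coalgebra ⥤ G.Coalgebra,
      Nonempty (T ⊣ Rt) ∧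
      ∀ B : H.Coalgebra,
        ∃ (ι : Rt.obj B ⟶ G.cofree.obj (R.obj (H.forget.obj B)))
          (w : ι ≫ phiOne G H S σ R adj B = ι ≫ phiTwo G H R B),
          Nonempty (IsLimit (Fork.ofι ι w)) := by
  obtain ⟨hσ1, hσ2⟩ := hσ
  haveI : HasLimitsOfShape WalkingParallelPair G.Coalgebra :=
    ⟨fun D => Comonad.forget_creates_limits_of_comonad_preserves D⟩
  refine ⟨fun B => phiOne_psi σ adj hσ1 B, fun B => phiTwo_psi B, ?_⟩
  have he : ∀ (A' A : G.Coalgebra) (B : H.Coalgebra) (q : A' ⟶ A) (m : T.obj A ⟶ B),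
      liftedEquiv σ adj hTobj A' B (T.map q ≫ m) = q ≫ liftedEquiv σ adj hTobj A B m :=
    fun A' A B q m => liftedEquiv_natural σ adj hT hTobj A' A B q m
  exact ⟨Adjunction.rightAdjointOfEquiv (fun A B => liftedEquiv σ adj hTobj A B) he,
    ⟨Adjunction.adjunctionOfEquivRight _ he⟩,
    fun B => ⟨equalizer.ι _ _, equalizer.condition _ _, ⟨equalizerIsEqualizer _ _⟩⟩⟩
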